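/- arXiv:2211.16766 — 2 statements merged into one kernel-verified Lean document; each statement's English description precedes it below -/
import Mathlib

section
/- Let a, b be binary sequences of period n with (a_0, b_0) = (1, 0) and suppose Σ_{λ=1}^{n-1}(a_λ - b_λ)2^λ < 0. Then σ(a) - σ(b) < 0 and w₂(|σ(a^{(1)}) - σ(b^{(1)})|) = n - w₂(|σ(a) - σ(b)|), where c^{(1)} denotes cyclic shift by 1. -/
def w2 (a : ℕ) : ℕ := (Nat.digits 2 a).sum

def sigma (n : ℕ) (a : ℕ → ℕ) : ℕ := ∑ l ∈ Finset.range n, a l * 2 ^ l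

lemma w2_rec (m : ℕ) : w2 m = m % 2 + w2 (m / 2) := by
  rcases Nat.eq_zero_or_pos m with h | h
  · simp [h, w2]
  · unfold w2
    rw [Nat.digits_def' (by norm_num : 1 < 2) h, List.sum_cons]

lemma w2_two_mul (m : ℕ) : w2 (2 * m) = w2 m := by
  rw [w2_rec (2 * m)]
  simp

lemma w2_compl : ∀ n x : ℕ, x < 2 ^ n → w2 (2 ^ n - 1 - x) + w2 x = n := by
  intro n
  induction n with
  | zero => intro x hx; interval_cases x; simp [w2]
  | succ n ih =>
    intro x hx
    have hp : (2:ℕ) ^ (n+1) = 2 * 2 ^ n := by ring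
    have hx2 : x / 2 < 2 ^ n := by omega
    have hr : x % 2 < 2 := Nat.mod_lt _ (by norm_num)
    have hdm := Nat.div_add_mod x 2
    have h1 : 2 ^ (n+1) - 1 - x = 2 * (2 ^ n - 1 - x / 2) + (1 - x % 2) := by omega
    rw [h1, w2_rec (2 * (2 ^ n - 1 - x / 2) + (1 - x % 2)), w2_rec x]
    have e1 : (2 * (2 ^ n - 1 - x / 2) + (1 - x % 2)) % 2 = 1 - x % 2 := by omega
    have e2 : (2 * (2 ^ n - 1 - x / 2) + (1 - x % 2)) / 2 = 2 ^ n - 1 - x / 2 := by omega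
    rw [e1, e2]
    have := ih (x / 2) hx2
    omega

lemma sum_pow2 (n : ℕ) : ∑ l ∈ Finset.range n, 2 ^ l = 2 ^ n - 1 := by
  induction n with
  | zero => simp
  | succ n ih =>
    rw [Finset.sum_range_succ, ih]
    have : 1 ≤ 2 ^ n := Nat.one_le_two_pow
    omega

lemma sigma_split (n : ℕ) (hn : 1 ≤ n) (a : ℕ → ℕ) :
    sigma n a = a 0 + ∑ l ∈ Finset.Ico 1 n, a l * 2 ^ l := by
  rw [sigma, Finset.range_eq_Ico, Finset.sum_eq_sum_Ico_succ_bot hn]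
  simp

lemma sigma_shift (n : ℕ) (hn : 1 ≤ n) (a : ℕ → ℕ) (hper : a n = a 0) :
    2 * sigma n (fun l => a (l + 1)) + a 0 = sigma n a + a 0 * 2 ^ n := by
  have h1 : 2 * sigma n (fun l => a (l + 1)) = ∑ l ∈ Finset.range n, a (l + 1) * 2 ^ (l + 1) := by
    rw [sigma, Finset.mul_sum]
    apply Finset.sum_congr rfl
    intro l _
    ring
  have h2 : ∑ l ∈ Finset.Ico 1 (n + 1), a l * 2 ^ l
      = ∑ l ∈ Finset.range n, a (l + 1) * 2 ^ (l + 1) := by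
    rw [Finset.sum_Ico_eq_sum_range]
    simp [Nat.add_comm 1]
  have h3 : ∑ l ∈ Finset.Ico 1 (n + 1), a l * 2 ^ l
      = (∑ l ∈ Finset.Ico 1 n, a l * 2 ^ l) + a n * 2 ^ n :=
    Finset.sum_Ico_succ_top hn _
  rw [h1, ← h2, h3, sigma_split n hn a, hper]
  ring

theorem sigma_diff_shift_one_neg (n : ℕ) (hn : 2 ≤ n) (a b : ℕ → ℕ)
    (hbina : ∀ l, a l ≤ 1) (hbinb : ∀ l, b l ≤ 1)
    (hpera : ∀ l, a (l + n) = a l) (hperb : ∀ l, b (l + n) = b l)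
    (ha0 : a 0 = 1) (hb0 : b 0 = 0)
    (hneg : ∑ l ∈ Finset.Ico 1 n, ((a l : ℤ) - b l) * 2 ^ l < 0) :
    (sigma n a : ℤ) - sigma n b < 0 ∧
    w2 ((sigma n (fun l => a (l + 1)) : ℤ) - sigma n (fun l => b (l + 1))).natAbs
      = n - w2 ((sigma n a : ℤ) - sigma n b).natAbs := by
  have hn1 : 1 ≤ n := by omega
  have han : a n = a 0 := by have := hpera 0; simpa using this
  have hbn : b n = b 0 := by have := hperb 0; simpa using this
  -- difference equals 1 + S
  have hdiff : (sigma n a : ℤ) - sigma n b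
      = 1 + ∑ l ∈ Finset.Ico 1 n, ((a l : ℤ) - b l) * 2 ^ l := by
    rw [sigma_split n hn1 a, sigma_split n hn1 b, ha0, hb0]
    push_cast
    have : ∑ l ∈ Finset.Ico 1 n, ((a l : ℤ) - b l) * 2 ^ l
        = (∑ l ∈ Finset.Ico 1 n, (a l : ℤ) * 2 ^ l) - ∑ l ∈ Finset.Ico 1 n, (b l : ℤ) * 2 ^ l := by
      rw [← Finset.sum_sub_distrib]
      exact Finset.sum_congr rfl (fun l _ => sub_mul _ _ _)
    rw [this]
    ring
  -- S is even
  have heven : (2 : ℤ) ∣ ∑ l ∈ Finset.Ico 1 n, ((a l : ℤ) - b l) * 2 ^ l := by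
    apply Finset.dvd_sum
    intro l hl
    have hl1 : l ≠ 0 := by
      simp only [Finset.mem_Ico] at hl; omega
    exact Dvd.dvd.mul_left (dvd_pow_self 2 hl1) _
  have hDneg : (sigma n a : ℤ) - sigma n b < 0 := by
    rw [hdiff]
    omega
  refine ⟨hDneg, ?_⟩
  -- bounds
  have hsa1 : 1 ≤ sigma n a := by
    rw [sigma_split n hn1 a, ha0]; omega
  have hsb : sigma n b ≤ 2 ^ n - 1 := by
    calc sigma n b ≤ ∑ l ∈ Finset.range n, 2 ^ l := by
          rw [sigma]
          apply Finset.sum_le_sum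
          intro l _
          have h1 : b l * 2 ^ l ≤ 1 * 2 ^ l := Nat.mul_le_mul_right _ (hbinb l)
          simpa using h1
      _ = 2 ^ n - 1 := sum_pow2 n
  -- shift relations
  have hsha := sigma_shift n hn1 a han
  have hshb := sigma_shift n hn1 b hbn
  rw [ha0] at hsha
  rw [hb0] at hshb
  -- pass to integers
  have hone : 1 ≤ 2 ^ n := Nat.one_le_two_pow
  have hbridge : ((2 ^ n : ℕ) : ℤ) = (2 : ℤ) ^ n := by push_cast; ring
  zify at hsha hshb
  zify [hone] at hsb
  have hZ : 2 * ((sigma n (fun l => a (l + 1)) : ℤ) - sigma n (fun l => b (l + 1)))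
      = ((sigma n a : ℤ) - sigma n b) + (2 : ℤ) ^ n - 1 := by linarith
  set m := ((sigma n (fun l => a (l + 1)) : ℤ) - sigma n (fun l => b (l + 1))).natAbs with hm
  set k := ((sigma n a : ℤ) - sigma n b).natAbs with hk
  have hDk : (sigma n a : ℤ) - sigma n b = -(k : ℤ) := by omega
  have hsaZ : (1 : ℤ) ≤ (sigma n a : ℤ) := by exact_mod_cast hsa1
  -- key nat facts
  have hklt : k < 2 ^ n := by omega
  have h2m : 2 * m = 2 ^ n - 1 - k := by omega
  have hcompl := w2_compl n k hklt
  have : w2 m = w2 (2 ^ n - 1 - k) := by rw [← h2m, w2_two_mul]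
  omega
end

section
/- Let a be a non-constant binary sequence of period n ≥ 2, and for 1 ≤ τ ≤ n-1 define the arithmetic autocorrelation A_a(τ) = 2w₂(σ(a) - σ(a^{(τ)})) - n if σ(a) > σ(a^{(τ)}), and A_a(τ) = n - 2w₂(σ(a^{(τ)}) - σ(a)) otherwise. Then |A_a(τ)| ≤ n - 2 for all 1 ≤ τ ≤ n-1. -/
/-- arithmetic autocorrelation of the sequence `a` at shift `τ` -/
def arithAC (n : ℕ) (a : ℕ → ℕ) (τ : ℕ) : ℤ :=
  if sigma n a > sigma n (fun l => a (l + τ)) then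
    2 * w2 (sigma n a - sigma n (fun l => a (l + τ))) - (n : ℤ)
  else
    (n : ℤ) - 2 * w2 (sigma n (fun l => a (l + τ)) - sigma n a)

lemma sigma_lt (n : ℕ) (b : ℕ → ℕ) (hb : ∀ l, b l ≤ 1) : sigma n b < 2 ^ n := by
  have h : sigma n b ≤ ∑ l ∈ Finset.range n, 2 ^ l := by
    apply Finset.sum_le_sum
    intro i _
    calc b i * 2 ^ i ≤ 1 * 2 ^ i := by
          exact Nat.mul_le_mul_right _ (hb i)
      _ = 2 ^ i := one_mul _
  have h2 : ∑ l ∈ Finset.range n, 2 ^ l = 2 ^ n - 1 := by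
    simpa using Nat.geomSum_eq (le_refl 2) n
  have : (0:ℕ) < 2 ^ n := Nat.pow_pos (by norm_num)
  omega

lemma sigma_pos (n : ℕ) (b : ℕ → ℕ) (h : ∃ l < n, b l ≠ 0) : 1 ≤ sigma n b := by
  obtain ⟨l, hl, hbl⟩ := h
  have : b l * 2 ^ l ≤ sigma n b :=
    Finset.single_le_sum (f := fun i => b i * 2 ^ i) (fun i _ => Nat.zero_le _)
      (Finset.mem_range.mpr hl)
  have hp : 0 < 2 ^ l := Nat.pow_pos (by norm_num)
  have hbl0 : 0 < b l := Nat.pos_of_ne_zero hbl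
  have h1 : 1 ≤ b l * 2 ^ l := Nat.mul_pos hbl0 hp
  omega

lemma sigma_le (n : ℕ) (b : ℕ → ℕ) (hb : ∀ l, b l ≤ 1) (h : ∃ l < n, b l ≠ 1) :
    sigma n b ≤ 2 ^ n - 2 := by
  obtain ⟨l, hl, hbl⟩ := h
  have hbl0 : b l = 0 := by have := hb l; omega
  have h : sigma n b + 2 ^ l ≤ ∑ i ∈ Finset.range n, 2 ^ i := by
    have : sigma n b + 2 ^ l = ∑ i ∈ Finset.range n,
        (b i * 2 ^ i + if i = l then 2 ^ l else 0) := by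
      rw [Finset.sum_add_distrib, Finset.sum_ite_eq' (Finset.range n) l fun _ => 2 ^ l]
      simp [sigma, Finset.mem_range.mpr hl]
    rw [this]
    apply Finset.sum_le_sum
    intro i hi
    by_cases hil : i = l
    · subst hil; simp [hbl0]
    · simp only [hil, if_false, add_zero]
      calc b i * 2 ^ i ≤ 1 * 2 ^ i := Nat.mul_le_mul_right _ (hb i)
        _ = 2 ^ i := one_mul _
  have h2 : ∑ i ∈ Finset.range n, 2 ^ i = 2 ^ n - 1 := by
    simpa using Nat.geomSum_eq (le_refl 2) n
  have hl1 : 1 ≤ 2 ^ l := Nat.one_le_two_pow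
  have : (0:ℕ) < 2 ^ n := Nat.pow_pos (by norm_num)
  omega

lemma sigma_inj (n : ℕ) (a b : ℕ → ℕ) (ha : ∀ l, a l ≤ 1) (hb : ∀ l, b l ≤ 1)
    (h : sigma n a = sigma n b) : ∀ l < n, a l = b l := by
  induction n with
  | zero => intro l hl; omega
  | succ m ih =>
    have hsa : sigma (m + 1) a = sigma m a + a m * 2 ^ m := Finset.sum_range_succ _ _
    have hsb : sigma (m + 1) b = sigma m b + b m * 2 ^ m := Finset.sum_range_succ _ _
    have hla : sigma m a < 2 ^ m := sigma_lt m a ha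
    have hlb : sigma m b < 2 ^ m := sigma_lt m b hb
    have ham := ha m
    have hbm := hb m
    have key : a m = b m ∧ sigma m a = sigma m b := by
      rw [hsa, hsb] at h
      interval_cases h1 : a m <;> interval_cases h2 : b m <;> simp_all <;> omega
    intro l hl
    rcases Nat.lt_succ_iff_lt_or_eq.mp hl with hlm | hlm
    · exact ih key.2 l hlm
    · subst hlm; exact key.1

lemma ofDigits_replicate_one (n : ℕ) : Nat.ofDigits 2 (List.replicate n 1) = 2 ^ n - 1 := by
  induction n with
  | zero => simp
  | succ m ih =>
    rw [List.replicate_succ, Nat.ofDigits_cons, ih]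
    have : (0:ℕ) < 2 ^ m := Nat.pow_pos (by norm_num)
    push_cast
    ring_nf
    omega

lemma all_one (L : List ℕ) (h1 : ∀ x ∈ L, x ≤ 1) (h2 : L.sum = L.length) :
    ∀ x ∈ L, x = 1 := by
  induction L with
  | nil => simp
  | cons a t ih =>
    have hts : t.sum ≤ t.length := by
      calc t.sum ≤ t.length * 1 :=
            List.sum_le_card_nsmul t 1 (fun x hx => h1 x (List.mem_cons_of_mem a hx))
        _ = t.length := mul_one _
    have ha : a ≤ 1 := h1 a List.mem_cons_self
    simp only [List.sum_cons, List.length_cons] at h2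
    have hts' : t.sum = t.length := by omega
    intro x hx
    rcases List.mem_cons.mp hx with h | h
    · omega
    · exact ih (fun y hy => h1 y (List.mem_cons_of_mem a hy)) hts' x h

lemma w2_pos (d : ℕ) (hd : d ≠ 0) : 1 ≤ w2 d := by
  have hnil : Nat.digits 2 d ≠ [] := Nat.digits_ne_nil_iff_ne_zero.mpr hd
  have hmem := List.getLast_mem hnil
  have hlast : (Nat.digits 2 d).getLast hnil ≠ 0 := Nat.getLast_digit_ne_zero 2 hd
  have hle : (Nat.digits 2 d).getLast hnil ≤ (Nat.digits 2 d).sum :=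
    List.single_le_sum (fun x _ => Nat.zero_le x) _ hmem
  have hw : w2 d = (Nat.digits 2 d).sum := rfl
  omega

lemma w2_le (n d : ℕ) (hn : 1 ≤ n) (hd : d < 2 ^ n) (hd' : d ≠ 2 ^ n - 1) :
    w2 d ≤ n - 1 := by
  rcases Nat.eq_zero_or_pos d with h0 | h0
  · subst h0; simp [w2]
  set L := Nat.digits 2 d with hL
  have hw : w2 d = L.sum := rfl
  have hlen : L.length ≤ n := by
    rw [hL, Nat.digits_len 2 d (by norm_num) (by omega)]
    have : Nat.log 2 d < n := Nat.log_lt_of_lt_pow (by omega) hd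
    omega
  have hdig : ∀ x ∈ L, x ≤ 1 := by
    intro x hx
    have := Nat.digits_lt_base (by norm_num) hx
    omega
  have hsum : L.sum ≤ L.length := by
    calc L.sum ≤ L.length * 1 := List.sum_le_card_nsmul L 1 hdig
      _ = L.length := mul_one _
  by_contra hc
  have hsl : L.sum = L.length := by omega
  have hlenn : L.length = n := by omega
  have hall1 : ∀ x ∈ L, x = 1 := all_one L hdig hsl
  have hrep : L = List.replicate n 1 := List.eq_replicate_iff.mpr ⟨hlenn, hall1⟩
  have : d = 2 ^ n - 1 := by
    have hd2 : d = Nat.ofDigits 2 L := (Nat.ofDigits_digits 2 d).symm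
    rw [hrep] at hd2
    rw [hd2, ofDigits_replicate_one]
  exact hd' this

theorem arithAC_bound (n : ℕ) (hn : 2 ≤ n) (a : ℕ → ℕ)
    (hbin : ∀ l, a l ≤ 1) (hper : ∀ l, a (l + n) = a l)
    (hnz : ∃ l < n, a l ≠ 0) (hno : ∃ l < n, a l ≠ 1)
    (hshift : ∀ τ, 1 ≤ τ → τ ≤ n - 1 → ∃ l < n, a (l + τ) ≠ a l) :
    ∀ τ, 1 ≤ τ → τ ≤ n - 1 → |arithAC n a τ| ≤ (n : ℤ) - 2 := by
  intro τ hτ1 hτ2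
  set b : ℕ → ℕ := fun l => a (l + τ) with hbdef
  have hbbin : ∀ l, b l ≤ 1 := fun l => hbin _
  have hτn : τ < n := by omega
  have hshiftex : ∀ P : ℕ → Prop, (∃ l < n, P (a l)) → ∃ l < n, P (b l) := by
    rintro P ⟨l, hl, hP⟩
    by_cases hlτ : τ ≤ l
    · exact ⟨l - τ, by omega, by simp only [hbdef]; rw [Nat.sub_add_cancel hlτ]; exact hP⟩
    · refine ⟨l + n - τ, by omega, ?_⟩
      simp only [hbdef]
      have : l + n - τ + τ = l + n := by omega
      rw [this, hper]; exact hP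
  have hbnz : ∃ l < n, b l ≠ 0 := hshiftex (fun x => x ≠ 0) hnz
  have hbno : ∃ l < n, b l ≠ 1 := hshiftex (fun x => x ≠ 1) hno
  set S := sigma n a with hS
  set T := sigma n b with hT
  have hS1 : 1 ≤ S := sigma_pos n a hnz
  have hT1 : 1 ≤ T := sigma_pos n b hbnz
  have hS2 : S ≤ 2 ^ n - 2 := sigma_le n a hbin hno
  have hT2 : T ≤ 2 ^ n - 2 := sigma_le n b hbbin hbno
  have hpow : 4 ≤ 2 ^ n := by
    calc (4:ℕ) = 2 ^ 2 := rfl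
    _ ≤ 2 ^ n := Nat.pow_le_pow_right (by norm_num) hn
  have hne : S ≠ T := by
    intro heq
    obtain ⟨l, hl, hld⟩ := hshift τ hτ1 hτ2
    exact hld (sigma_inj n b a hbbin hbin heq.symm l hl)
  have key : ∀ d : ℕ, 1 ≤ d → d ≤ 2 ^ n - 3 → 1 ≤ w2 d ∧ w2 d ≤ n - 1 := by
    intro d h1 h2
    refine ⟨w2_pos d (by omega), w2_le n d (by omega) (by omega) (by omega)⟩
  unfold arithAC
  rw [← hS, ← hT]
  split_ifs with hgt
  · obtain ⟨hw1, hw2⟩ := key (S - T) (by omega) (by omega)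
    rw [abs_le]
    constructor <;> push_cast <;> omega
  · have hlt : S < T := by omega
    obtain ⟨hw1, hw2⟩ := key (T - S) (by omega) (by omega)
    rw [abs_le]
    constructor <;> push_cast <;> omega
end
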